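/- Let p̂_π be the trajectory distribution induced by a history-dependent policy π with everywhere-positive action probabilities, let d(τ) = ρ₀(s₀) Π_{t=0}^{T−1} P(s_{t+1} | s_t, a_t) be the dynamics-only factor, and define the target trajectory distribution p(τ) = d(τ) · exp(Σ_{t=0}^{T} r(s_t, a_t)) / Z, where Z = Σ_τ d(τ) exp(Σ_{t=0}^{T} r(s_t, a_t)). Then p̂_π is absolutely continuous with respect to p, and the negative Kullback–Leibler divergence satisfies − D_KL(p̂_π ‖ p) = Σ_{t=0}^{T} E_{τ ∼ p̂_π}[ r(s_t, a_t) ] + Σ_{t=0}^{T} E_{τ ∼ p̂_π}[ H(π(· | h_t)) ] − log Z, where H(π(· | h_t)) is the Shannon entropy of the action distribution π(· | h_t). -/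

import Mathlib

open Finset
open scoped Classical

/-!
STATEMENT 2: Let `p̂_π` be the trajectory distribution induced by a history-dependent
policy `π` with everywhere-positive action probabilities, let
`d(τ) = ρ₀(s₀) ∏_{t<T} P(s_{t+1}|s_t,a_t)` be the dynamics-only factor, and let the
target trajectory distribution be `p(τ) = d(τ)·exp(∑_t r(s_t,a_t))/Z` with
`Z = ∑_τ d(τ) exp(∑_t r(s_t,a_t))`.  Then `p̂_π ≪ p` and
`− D_KL(p̂_π ‖ p) = ∑_t E_{τ∼p̂_π}[r(s_t,a_t)] + ∑_t E_{τ∼p̂_π}[H(π(·|h_t))] − log Z`.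
-/

/-- A trajectory `τ = (s₀, a₀, …, s_T, a_T)` over horizon `T`. -/
abbrev Traj (S A : Type) (T : ℕ) := Fin (T + 1) → S × A

/-- The history `h_t = (s₀, a₀, …, s_t)` of a trajectory. -/
def histOf {S A : Type} {T : ℕ} (τ : Traj S A T) (t : Fin (T + 1)) :
    (Fin (t.1 + 1) → S) × (Fin t.1 → A) :=
  (fun i => (τ ⟨i.1, lt_of_le_of_lt (Nat.lt_succ_iff.mp i.2) t.2⟩).1,
   fun i => (τ ⟨i.1, lt_trans i.2 t.2⟩).2)

/-- A history-dependent policy. -/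
abbrev Policy (S A : Type) (T : ℕ) :=
  ∀ t : Fin (T + 1), ((Fin (t.1 + 1) → S) × (Fin t.1 → A)) → A → ℝ

/-- The induced trajectory distribution
`p̂_π(τ) = ρ₀(s₀) · ∏_{t=0}^{T} π(a_t | h_t) · ∏_{t=0}^{T-1} P(s_{t+1} | s_t, a_t)`. -/
def trajProb {S A : Type} [Fintype S] [Fintype A] {T : ℕ}
    (ρ₀ : S → ℝ) (P : S → A → S → ℝ) (π : Policy S A T) (τ : Traj S A T) : ℝ :=
  ρ₀ (τ 0).1 * (∏ t, π t (histOf τ t) (τ t).2) *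
    ∏ t : Fin T, P (τ t.castSucc).1 (τ t.castSucc).2 (τ t.succ).1

/-- The dynamics-only factor `d(τ) = ρ₀(s₀) ∏_{t=0}^{T-1} P(s_{t+1}|s_t,a_t)`. -/
def dynProb {S A : Type} [Fintype S] [Fintype A] {T : ℕ}
    (ρ₀ : S → ℝ) (P : S → A → S → ℝ) (τ : Traj S A T) : ℝ :=
  ρ₀ (τ 0).1 * ∏ t : Fin T, P (τ t.castSucc).1 (τ t.castSucc).2 (τ t.succ).1

/-- The normalizing constant `Z = ∑_τ d(τ) exp(∑_{t=0}^{T} r(s_t,a_t))`. -/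
noncomputable def partZ (S A : Type) [Fintype S] [Fintype A] (T : ℕ)
    (ρ₀ : S → ℝ) (P : S → A → S → ℝ) (r : S → A → ℝ) : ℝ :=
  ∑ τ : Traj S A T, dynProb ρ₀ P τ * Real.exp (∑ t, r (τ t).1 (τ t).2)

/-- The target (optimal) trajectory distribution `p(τ) = d(τ)·exp(∑_t r_t)/Z`. -/
noncomputable def targetProb {S A : Type} [Fintype S] [Fintype A] {T : ℕ}
    (ρ₀ : S → ℝ) (P : S → A → S → ℝ) (r : S → A → ℝ) (τ : Traj S A T) : ℝ :=
  dynProb ρ₀ P τ * Real.exp (∑ t, r (τ t).1 (τ t).2) / partZ S A T ρ₀ P r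


namespace KLAux

set_option linter.unusedSectionVars false

variable {S A : Type} [Fintype S] [Fintype A]

lemma trajProb_eq {T : ℕ} (ρ₀ : S → ℝ) (P : S → A → S → ℝ) (π : Policy S A T) (τ : Traj S A T) :
    trajProb ρ₀ P π τ = dynProb ρ₀ P τ * ∏ t, π t (histOf τ t) (τ t).2 := by
  unfold trajProb dynProb; ring

/-- the history at time 0 determined by the initial state -/
def histZ {T : ℕ} (s : S) : (Fin ((0 : Fin (T+1)).1 + 1) → S) × (Fin (0 : Fin (T+1)).1 → A) :=
  (fun _ => s, fun i => absurd i.2 (Nat.not_lt_zero _))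

lemma histOf_zero {T : ℕ} (σ : Traj S A T) : histOf σ 0 = histZ (σ 0).1 := by
  unfold histOf histZ
  refine Prod.ext ?_ ?_
  · funext i
    have hi : i.1 = 0 := Nat.lt_one_iff.mp i.2
    exact congrArg (fun z => (σ z).1) (Fin.ext hi)
  · funext i
    exact absurd i.2 (Nat.not_lt_zero _)

lemma cons_eq_head {T : ℕ} (x : S × A) (τ : Traj S A T) (i : Fin (T+2)) (hi : i.1 = 0) :
    (Fin.cons x τ : Traj S A (T+1)) i = x := by
  have : i = 0 := Fin.ext hi
  rw [this]; exact @Fin.cons_zero (T+1) (fun _ => S × A) x τ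

lemma cons_eq_tail {T : ℕ} (x : S × A) (τ : Traj S A T) (i : Fin (T+2)) (j : Fin (T+1))
    (hi : i.1 = j.1 + 1) :
    (Fin.cons x τ : Traj S A (T+1)) i = τ j := by
  have : i = j.succ := Fin.ext (by simpa using hi)
  rw [this]; exact @Fin.cons_succ (T+1) (fun _ => S × A) x τ j

/-- shift a horizon (T+1) policy to horizon T by fixing the first state-action pair -/
def shiftPolicy {T : ℕ} (π : Policy S A (T+1)) (x : S × A) : Policy S A T :=
  fun t h => π t.succ (Fin.cons x.1 h.1, Fin.cons x.2 h.2)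

lemma histOf_cons_succ {T : ℕ} (x : S × A) (τ : Traj S A T) (t : Fin (T+1)) :
    histOf (Fin.cons x τ : Traj S A (T+1)) t.succ
      = (Fin.cons x.1 (histOf τ t).1, Fin.cons x.2 (histOf τ t).2) := by
  have h1 : (histOf (Fin.cons x τ : Traj S A (T+1)) t.succ).1
      = Fin.cons x.1 (histOf τ t).1 := by
    funext i
    refine Fin.cases ?_ ?_ i
    · refine (congrArg Prod.fst (cons_eq_head x τ ⟨0, by omega⟩ rfl)).trans ?_
      exact (@Fin.cons_zero (t.1+1) (fun _ => S) x.1 (histOf τ t).1).symm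
    · intro j
      refine (congrArg Prod.fst
        (cons_eq_tail x τ ⟨j.1+1, by omega⟩ ⟨j.1, by omega⟩ rfl)).trans ?_
      exact (@Fin.cons_succ (t.1+1) (fun _ => S) x.1 (histOf τ t).1 j).symm
  have h2 : (histOf (Fin.cons x τ : Traj S A (T+1)) t.succ).2
      = Fin.cons x.2 (histOf τ t).2 := by
    funext i
    refine Fin.cases ?_ ?_ i
    · refine (congrArg Prod.snd (cons_eq_head x τ ⟨0, by omega⟩ rfl)).trans ?_
      exact (@Fin.cons_zero t.1 (fun _ => A) x.2 (histOf τ t).2).symm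
    · intro j
      refine (congrArg Prod.snd
        (cons_eq_tail x τ ⟨j.1+1, by omega⟩ ⟨j.1, by omega⟩ rfl)).trans ?_
      exact (@Fin.cons_succ t.1 (fun _ => A) x.2 (histOf τ t).2 j).symm
  exact Prod.ext h1 h2

lemma sum_traj_succ {T : ℕ} (f : Traj S A (T+1) → ℝ) :
    ∑ τ : Traj S A (T+1), f τ
      = ∑ x : S × A, ∑ τ : Traj S A T, f (Fin.cons x τ) := by
  have h := Fintype.sum_equiv (Fin.consEquiv (fun _ : Fin (T+2) => S × A))
    (fun p => f (Fin.cons p.1 p.2)) f (fun p => rfl)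
  rw [← h, Fintype.sum_prod_type]

lemma sum_traj_zero (f : Traj S A 0 → ℝ) :
    ∑ τ : Traj S A 0, f τ = ∑ x : S × A, f (fun _ => x) := by
  exact (Fintype.sum_equiv (Equiv.funUnique (Fin 1) (S × A)).symm
    (fun x => f (fun _ => x)) f (fun x => rfl)).symm

lemma trajProb_cons {T : ℕ} (ρ₀ : S → ℝ) (P : S → A → S → ℝ) (π : Policy S A (T+1))
    (x : S × A) (τ : Traj S A T) :
    trajProb ρ₀ P π (Fin.cons x τ) =
      ρ₀ x.1 * π 0 (histZ x.1) x.2 *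
        trajProb (P x.1 x.2) P (shiftPolicy π x) τ := by
  unfold trajProb
  rw [Fin.prod_univ_succ (fun t : Fin (T+2) =>
        π t (histOf (Fin.cons x τ : Traj S A (T+1)) t) ((Fin.cons x τ : Traj S A (T+1)) t).2),
      Fin.prod_univ_succ (fun t : Fin (T+1) =>
        P ((Fin.cons x τ : Traj S A (T+1)) t.castSucc).1
          ((Fin.cons x τ : Traj S A (T+1)) t.castSucc).2
          ((Fin.cons x τ : Traj S A (T+1)) t.succ).1)]
  have e0 : (Fin.cons x τ : Traj S A (T+1)) 0 = x := @Fin.cons_zero (T+1) (fun _ => S × A) x τ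
  have ez : histOf (Fin.cons x τ : Traj S A (T+1)) 0 = histZ x.1 := by
    rw [histOf_zero, e0]
  have ecs : ∀ t : Fin (T+1), (Fin.cons x τ : Traj S A (T+1)) t.succ = τ t :=
    fun t => @Fin.cons_succ (T+1) (fun _ => S × A) x τ t
  have ecs0 : (Fin.cons x τ : Traj S A (T+1)) (Fin.castSucc 0) = x :=
    cons_eq_head x τ _ (by simp)
  have eπ : ∀ t : Fin (T+1),
      π t.succ (histOf (Fin.cons x τ : Traj S A (T+1)) t.succ) ((Fin.cons x τ : Traj S A (T+1)) t.succ).2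
        = shiftPolicy π x t (histOf τ t) (τ t).2 := by
    intro t
    rw [histOf_cons_succ, ecs]
    rfl
  have eP : ∀ t : Fin T,
      P ((Fin.cons x τ : Traj S A (T+1)) t.succ.castSucc).1
        ((Fin.cons x τ : Traj S A (T+1)) t.succ.castSucc).2
        ((Fin.cons x τ : Traj S A (T+1)) t.succ.succ).1
      = P (τ t.castSucc).1 (τ t.castSucc).2 (τ t.succ).1 := by
    intro t
    rw [cons_eq_tail x τ t.succ.castSucc t.castSucc (by simp), ecs t.succ]
  rw [Finset.prod_congr rfl (fun t _ => eπ t), Finset.prod_congr rfl (fun t _ => eP t)]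
  rw [e0, ez, ecs0, ecs 0]
  ring

lemma cons_zero' {T : ℕ} (x : S × A) (τ : Traj S A T) :
    (Fin.cons x τ : Traj S A (T+1)) 0 = x := @Fin.cons_zero (T+1) (fun _ => S × A) x τ

lemma cons_succ' {T : ℕ} (x : S × A) (τ : Traj S A T) (t : Fin (T+1)) :
    (Fin.cons x τ : Traj S A (T+1)) t.succ = τ t :=
  @Fin.cons_succ (T+1) (fun _ => S × A) x τ t

lemma trajProb_const (ρ₀ : S → ℝ) (P : S → A → S → ℝ) (π : Policy S A 0) (x : S × A) :
    trajProb ρ₀ P π (fun _ => x : Traj S A 0) = ρ₀ x.1 * π 0 (histZ x.1) x.2 := by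
  unfold trajProb
  rw [Fin.prod_univ_one, Fin.prod_univ_zero, histOf_zero]
  ring

lemma sum_trajProb {T : ℕ} (ρ₀ : S → ℝ) (P : S → A → S → ℝ) (π : Policy S A T)
    (hρ : ∑ s, ρ₀ s = 1) (hP : ∀ s a, ∑ s', P s a s' = 1)
    (hπ : ∀ t h, ∑ a, π t h a = 1) :
    ∑ τ : Traj S A T, trajProb ρ₀ P π τ = 1 := by
  induction T generalizing ρ₀ with
  | zero =>
    rw [sum_traj_zero]
    simp_rw [trajProb_const]
    rw [Fintype.sum_prod_type]
    simp_rw [← Finset.mul_sum, hπ, mul_one]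
    exact hρ
  | succ T ih =>
    rw [sum_traj_succ]
    simp_rw [trajProb_cons]
    have hinner : ∀ x : S × A,
        ∑ τ : Traj S A T, trajProb (P x.1 x.2) P (shiftPolicy π x) τ = 1 :=
      fun x => ih (P x.1 x.2) (shiftPolicy π x) (hP x.1 x.2) (fun u h => hπ u.succ _)
    simp_rw [← Finset.mul_sum, hinner, mul_one]
    rw [Fintype.sum_prod_type]
    simp_rw [← Finset.mul_sum, hπ, mul_one]
    exact hρ

lemma sum_trajProb_action {T : ℕ} (ρ₀ : S → ℝ) (P : S → A → S → ℝ) (π : Policy S A T)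
    (hρ : ∑ s, ρ₀ s = 1) (hP : ∀ s a, ∑ s', P s a s' = 1)
    (hπ : ∀ t h, ∑ a, π t h a = 1) (t : Fin (T+1))
    (g : ((Fin (t.1 + 1) → S) × (Fin t.1 → A)) → A → ℝ) :
    ∑ τ : Traj S A T, trajProb ρ₀ P π τ * g (histOf τ t) ((τ t).2)
      = ∑ τ : Traj S A T,
          trajProb ρ₀ P π τ * ∑ a, π t (histOf τ t) a * g (histOf τ t) a := by
  induction T generalizing ρ₀ with
  | zero =>
    have ht : t = 0 := Fin.fin_one_eq_zero t
    subst ht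
    rw [sum_traj_zero, sum_traj_zero]
    simp_rw [trajProb_const, histOf_zero]
    rw [Fintype.sum_prod_type, Fintype.sum_prod_type]
    refine Finset.sum_congr rfl fun s _ => ?_
    simp only
    simp_rw [mul_assoc, ← Finset.mul_sum, ← Finset.sum_mul, hπ, one_mul]
  | succ T ih =>
    rcases Fin.eq_zero_or_eq_succ t with rfl | ⟨t', rfl⟩
    · rw [sum_traj_succ, sum_traj_succ]
      simp_rw [trajProb_cons, histOf_zero, cons_zero']
      have hinner : ∀ x : S × A,
          ∑ τ : Traj S A T, trajProb (P x.1 x.2) P (shiftPolicy π x) τ = 1 :=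
        fun x => sum_trajProb _ _ _ (hP x.1 x.2) hP (fun u h => hπ u.succ _)
      have l1 : ∀ x : S × A,
          (∑ τ : Traj S A T, ρ₀ x.1 * π 0 (histZ x.1) x.2 *
              trajProb (P x.1 x.2) P (shiftPolicy π x) τ * g (histZ x.1) x.2)
          = ρ₀ x.1 * π 0 (histZ x.1) x.2 * g (histZ x.1) x.2 := by
        intro x
        have : ∀ τ : Traj S A T,
            ρ₀ x.1 * π 0 (histZ x.1) x.2 *
              trajProb (P x.1 x.2) P (shiftPolicy π x) τ * g (histZ x.1) x.2
            = (ρ₀ x.1 * π 0 (histZ x.1) x.2 * g (histZ x.1) x.2) *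
              trajProb (P x.1 x.2) P (shiftPolicy π x) τ := fun τ => by ring
        rw [Finset.sum_congr rfl (fun τ _ => this τ), ← Finset.mul_sum, hinner, mul_one]
      have l2 : ∀ x : S × A,
          (∑ τ : Traj S A T, ρ₀ x.1 * π 0 (histZ x.1) x.2 *
              trajProb (P x.1 x.2) P (shiftPolicy π x) τ *
              ∑ a, π 0 (histZ x.1) a * g (histZ x.1) a)
          = ρ₀ x.1 * π 0 (histZ x.1) x.2 * ∑ a, π 0 (histZ x.1) a * g (histZ x.1) a := by
        intro x
        have : ∀ τ : Traj S A T,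
            ρ₀ x.1 * π 0 (histZ x.1) x.2 *
              trajProb (P x.1 x.2) P (shiftPolicy π x) τ *
              (∑ a, π 0 (histZ x.1) a * g (histZ x.1) a)
            = (ρ₀ x.1 * π 0 (histZ x.1) x.2 *
                ∑ a, π 0 (histZ x.1) a * g (histZ x.1) a) *
              trajProb (P x.1 x.2) P (shiftPolicy π x) τ := fun τ => by ring
        rw [Finset.sum_congr rfl (fun τ _ => this τ), ← Finset.mul_sum, hinner, mul_one]
      rw [Finset.sum_congr rfl (fun x _ => l1 x), Finset.sum_congr rfl (fun x _ => l2 x)]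
      rw [Fintype.sum_prod_type, Fintype.sum_prod_type]
      refine Finset.sum_congr rfl fun s _ => ?_
      simp only
      simp_rw [mul_assoc, ← Finset.mul_sum, ← Finset.sum_mul, hπ, one_mul]
    · rw [sum_traj_succ, sum_traj_succ]
      simp_rw [trajProb_cons, histOf_cons_succ, cons_succ']
      refine Finset.sum_congr rfl fun x _ => ?_
      have key := ih (P x.1 x.2) (shiftPolicy π x) (hP x.1 x.2)
        (fun u h => hπ u.succ _) t'
        (fun h a => g (Fin.cons x.1 h.1, Fin.cons x.2 h.2) a)
      calc
        ∑ τ : Traj S A T, ρ₀ x.1 * π 0 (histZ x.1) x.2 *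
            trajProb (P x.1 x.2) P (shiftPolicy π x) τ *
            g (Fin.cons x.1 (histOf τ t').1, Fin.cons x.2 (histOf τ t').2) ((τ t').2)
          = ρ₀ x.1 * π 0 (histZ x.1) x.2 *
            ∑ τ : Traj S A T, trajProb (P x.1 x.2) P (shiftPolicy π x) τ *
              g (Fin.cons x.1 (histOf τ t').1, Fin.cons x.2 (histOf τ t').2) ((τ t').2) := by
            rw [Finset.mul_sum]; exact Finset.sum_congr rfl fun τ _ => by ring
        _ = ρ₀ x.1 * π 0 (histZ x.1) x.2 *
            ∑ τ : Traj S A T, trajProb (P x.1 x.2) P (shiftPolicy π x) τ *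
              ∑ a, shiftPolicy π x t' (histOf τ t') a *
                g (Fin.cons x.1 (histOf τ t').1, Fin.cons x.2 (histOf τ t').2) a := by
            rw [key]
        _ = ∑ τ : Traj S A T, ρ₀ x.1 * π 0 (histZ x.1) x.2 *
              trajProb (P x.1 x.2) P (shiftPolicy π x) τ *
              ∑ a, π t'.succ (Fin.cons x.1 (histOf τ t').1, Fin.cons x.2 (histOf τ t').2) a *
                g (Fin.cons x.1 (histOf τ t').1, Fin.cons x.2 (histOf τ t').2) a := by
            rw [Finset.mul_sum]; exact Finset.sum_congr rfl fun τ _ => by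
              show _ = _
              unfold shiftPolicy
              ring

lemma dynProb_nonneg {T : ℕ} (ρ₀ : S → ℝ) (P : S → A → S → ℝ)
    (hρ : ∀ s, 0 ≤ ρ₀ s) (hP : ∀ s a s', 0 ≤ P s a s') (τ : Traj S A T) :
    0 ≤ dynProb ρ₀ P τ :=
  mul_nonneg (hρ _) (Finset.prod_nonneg fun t _ => hP _ _ _)

lemma trajProb_nonneg {T : ℕ} (ρ₀ : S → ℝ) (P : S → A → S → ℝ) (π : Policy S A T)
    (hρ : ∀ s, 0 ≤ ρ₀ s) (hP : ∀ s a s', 0 ≤ P s a s')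
    (hπ : ∀ t h a, 0 ≤ π t h a) (τ : Traj S A T) :
    0 ≤ trajProb ρ₀ P π τ :=
  mul_nonneg (mul_nonneg (hρ _) (Finset.prod_nonneg fun t _ => hπ _ _ _))
    (Finset.prod_nonneg fun t _ => hP _ _ _)

lemma partZ_pos [Nonempty S] [Nonempty A] {T : ℕ}
    (ρ₀ : S → ℝ) (P : S → A → S → ℝ) (r : S → A → ℝ)
    (hρn : ∀ s, 0 ≤ ρ₀ s) (hρs : ∑ s, ρ₀ s = 1)
    (hPn : ∀ s a s', 0 ≤ P s a s') (hPs : ∀ s a, ∑ s', P s a s' = 1) :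
    0 < partZ S A T ρ₀ P r := by
  have hs₀ : ∃ s, 0 < ρ₀ s := by
    by_contra h
    push_neg at h
    have : ∀ s ∈ (Finset.univ : Finset S), ρ₀ s = 0 :=
      fun s _ => le_antisymm (h s) (hρn s)
    rw [Finset.sum_eq_zero this] at hρs
    norm_num at hρs
  obtain ⟨s₀, hs₀⟩ := hs₀
  set a₀ := Classical.arbitrary A with ha₀
  have hnext : ∀ s : S, ∃ s', 0 < P s a₀ s' := by
    intro s
    by_contra h
    push_neg at h
    have : ∀ s' ∈ (Finset.univ : Finset S), P s a₀ s' = 0 :=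
      fun s' _ => le_antisymm (h s') (hPn s a₀ s')
    have := hPs s a₀
    rw [Finset.sum_eq_zero ‹∀ s' ∈ _, _›] at this
    norm_num at this
  set next : S → S := fun s => Classical.choose (hnext s) with hnextdef
  have hnextpos : ∀ s, 0 < P s a₀ (next s) := fun s => Classical.choose_spec (hnext s)
  set σ : ℕ → S := fun n => next^[n] s₀ with hσ
  set τ : Traj S A T := fun t => (σ t.1, a₀) with hτ
  have hd : 0 < dynProb ρ₀ P τ := by
    refine mul_pos ?_ (Finset.prod_pos fun t _ => ?_)
    · exact hs₀
    · have h1 : (τ t.castSucc).1 = σ t.1 := rfl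
      have h2 : (τ t.castSucc).2 = a₀ := rfl
      have h3 : (τ t.succ).1 = σ (t.1 + 1) := rfl
      rw [h1, h2, h3]
      have : σ (t.1 + 1) = next (σ t.1) := Function.iterate_succ_apply' next t.1 s₀
      rw [this]
      exact hnextpos _
  refine Finset.sum_pos' (fun τ' _ => mul_nonneg (dynProb_nonneg ρ₀ P hρn hPn τ')
    (Real.exp_pos _).le) ⟨τ, Finset.mem_univ τ, mul_pos hd (Real.exp_pos _)⟩

end KLAux

theorem neg_kl_eq_reward_plus_entropy_sub_logZ
    {S A : Type} [Fintype S] [Fintype A] [Nonempty S] [Nonempty A] {T : ℕ}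
    (ρ₀ : S → ℝ) (hρ₀ : (∀ s, 0 ≤ ρ₀ s) ∧ ∑ s, ρ₀ s = 1)
    (P : S → A → S → ℝ) (hP : ∀ s a, (∀ s', 0 ≤ P s a s') ∧ ∑ s', P s a s' = 1)
    (r : S → A → ℝ)
    (π : Policy S A T) (hπ : ∀ t h, (∀ a, 0 < π t h a) ∧ ∑ a, π t h a = 1) :
    (∀ τ : Traj S A T, targetProb ρ₀ P r τ = 0 → trajProb ρ₀ P π τ = 0) ∧
    (-(∑ τ ∈ Finset.univ.filter (fun τ : Traj S A T => 0 < trajProb ρ₀ P π τ),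
          trajProb ρ₀ P π τ * Real.log (trajProb ρ₀ P π τ / targetProb ρ₀ P r τ))
      = (∑ t : Fin (T + 1), ∑ τ : Traj S A T, trajProb ρ₀ P π τ * r (τ t).1 (τ t).2)
        + (∑ t : Fin (T + 1), ∑ τ : Traj S A T,
            trajProb ρ₀ P π τ *
              (- ∑ a ∈ Finset.univ.filter (fun a : A => 0 < π t (histOf τ t) a),
                  π t (histOf τ t) a * Real.log (π t (histOf τ t) a)))
        - Real.log (partZ S A T ρ₀ P r)) := by
  obtain ⟨hρ₀n, hρ₀s⟩ := hρ₀
  have hPn : ∀ s a s', 0 ≤ P s a s' := fun s a => (hP s a).1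
  have hPs : ∀ s a, ∑ s', P s a s' = 1 := fun s a => (hP s a).2
  have hπp : ∀ t h a, 0 < π t h a := fun t h => (hπ t h).1
  have hπs : ∀ t h, ∑ a, π t h a = 1 := fun t h => (hπ t h).2
  have hZ : 0 < partZ S A T ρ₀ P r := KLAux.partZ_pos ρ₀ P r hρ₀n hρ₀s hPn hPs
  have hnn : ∀ τ : Traj S A T, 0 ≤ trajProb ρ₀ P π τ :=
    KLAux.trajProb_nonneg ρ₀ P π hρ₀n hPn (fun t h a => (hπp t h a).le)
  have hsum1 : ∑ τ : Traj S A T, trajProb ρ₀ P π τ = 1 :=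
    KLAux.sum_trajProb ρ₀ P π hρ₀s hPs hπs
  constructor
  · intro τ h
    unfold targetProb at h
    rcases div_eq_zero_iff.mp h with h | h
    · rcases mul_eq_zero.mp h with h | h
      · rw [KLAux.trajProb_eq, h, zero_mul]
      · exact absurd h (Real.exp_ne_zero _)
    · exact absurd h hZ.ne'
  · -- main equality
    have hlog : ∀ τ ∈ Finset.univ.filter (fun τ : Traj S A T => 0 < trajProb ρ₀ P π τ),
        trajProb ρ₀ P π τ * Real.log (trajProb ρ₀ P π τ / targetProb ρ₀ P r τ)
        = trajProb ρ₀ P π τ *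
            ((∑ t, Real.log (π t (histOf τ t) (τ t).2)) - (∑ t, r (τ t).1 (τ t).2)
              + Real.log (partZ S A T ρ₀ P r)) := by
      intro τ hτ
      have htp : 0 < trajProb ρ₀ P π τ := (Finset.mem_filter.mp hτ).2
      have hππ : 0 < ∏ t, π t (histOf τ t) (τ t).2 :=
        Finset.prod_pos fun t _ => hπp t _ _
      have hd : 0 < dynProb ρ₀ P τ := by
        rcases (KLAux.dynProb_nonneg ρ₀ P hρ₀n hPn τ).eq_or_lt with h | h
        · rw [KLAux.trajProb_eq, ← h, zero_mul] at htp
          exact absurd htp (lt_irrefl 0)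
        · exact h
      have hT : 0 < targetProb ρ₀ P r τ := div_pos (mul_pos hd (Real.exp_pos _)) hZ
      congr 1
      rw [Real.log_div htp.ne' hT.ne']
      rw [KLAux.trajProb_eq, Real.log_mul hd.ne' hππ.ne',
        Real.log_prod (fun t _ => (hπp t _ _).ne')]
      unfold targetProb
      rw [Real.log_div (mul_pos hd (Real.exp_pos _)).ne' hZ.ne',
        Real.log_mul hd.ne' (Real.exp_ne_zero _), Real.log_exp]
      ring
    rw [Finset.sum_congr rfl hlog]
    rw [Finset.sum_filter_of_ne (fun τ _ hne => by
      rcases (hnn τ).eq_or_lt with h | h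
      · exact absurd (by rw [← h, zero_mul]) hne
      · exact h)]
    -- now sum over all τ
    have hsplit : ∑ τ : Traj S A T, trajProb ρ₀ P π τ *
          ((∑ t, Real.log (π t (histOf τ t) (τ t).2)) - (∑ t, r (τ t).1 (τ t).2)
            + Real.log (partZ S A T ρ₀ P r))
        = (∑ τ : Traj S A T, trajProb ρ₀ P π τ * ∑ t, Real.log (π t (histOf τ t) (τ t).2))
          - (∑ τ : Traj S A T, trajProb ρ₀ P π τ * ∑ t, r (τ t).1 (τ t).2)
          + Real.log (partZ S A T ρ₀ P r) := by
      rw [Finset.sum_congr rfl (fun τ _ => by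
        show trajProb ρ₀ P π τ * _ = trajProb ρ₀ P π τ * ∑ t, Real.log (π t (histOf τ t) (τ t).2)
          - trajProb ρ₀ P π τ * ∑ t, r (τ t).1 (τ t).2
          + trajProb ρ₀ P π τ * Real.log (partZ S A T ρ₀ P r)
        ring)]
      rw [Finset.sum_add_distrib, Finset.sum_sub_distrib, ← Finset.sum_mul, hsum1, one_mul]
    rw [hsplit]
    -- reward identity
    have hA : ∑ τ : Traj S A T, trajProb ρ₀ P π τ * ∑ t, r (τ t).1 (τ t).2
        = ∑ t : Fin (T + 1), ∑ τ : Traj S A T, trajProb ρ₀ P π τ * r (τ t).1 (τ t).2 := by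
      simp_rw [Finset.mul_sum]
      exact Finset.sum_comm
    -- entropy identity
    have hC : ∀ t : Fin (T + 1),
        ∑ τ : Traj S A T, trajProb ρ₀ P π τ * Real.log (π t (histOf τ t) (τ t).2)
        = ∑ τ : Traj S A T, trajProb ρ₀ P π τ *
            ∑ a, π t (histOf τ t) a * Real.log (π t (histOf τ t) a) :=
      fun t => KLAux.sum_trajProb_action ρ₀ P π hρ₀s hPs hπs t
        (fun h a => Real.log (π t h a))
    have hB : ∑ τ : Traj S A T, trajProb ρ₀ P π τ * ∑ t, Real.log (π t (histOf τ t) (τ t).2)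
        = ∑ t : Fin (T + 1), ∑ τ : Traj S A T, trajProb ρ₀ P π τ *
            ∑ a, π t (histOf τ t) a * Real.log (π t (histOf τ t) a) := by
      simp_rw [Finset.mul_sum]
      rw [Finset.sum_comm]
      exact Finset.sum_congr rfl fun t _ => by
        have h := hC t
        simp_rw [Finset.mul_sum] at h
        exact h
    have hfil : ∀ (t : Fin (T + 1)) (τ : Traj S A T),
        Finset.univ.filter (fun a : A => 0 < π t (histOf τ t) a) = Finset.univ :=
      fun t τ => Finset.filter_true_of_mem (fun a _ => hπp t _ a)
    have hD : (∑ t : Fin (T + 1), ∑ τ : Traj S A T,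
          trajProb ρ₀ P π τ *
            (- ∑ a ∈ Finset.univ.filter (fun a : A => 0 < π t (histOf τ t) a),
                π t (histOf τ t) a * Real.log (π t (histOf τ t) a)))
        = - ∑ t : Fin (T + 1), ∑ τ : Traj S A T, trajProb ρ₀ P π τ *
            ∑ a, π t (histOf τ t) a * Real.log (π t (histOf τ t) a) := by
      rw [← Finset.sum_neg_distrib]
      refine Finset.sum_congr rfl fun t _ => ?_
      rw [← Finset.sum_neg_distrib]
      refine Finset.sum_congr rfl fun τ _ => ?_
      rw [hfil t τ, mul_neg]
    rw [hA, hB, hD]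
    ring
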